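/- Let u, v ∈ V with uv ∈ E and θ_{uv} ≥ 0. If θ_{uv} ≥ Σ_{e ∈ δ({u,v}) ∩ E⁺} θ_e − Σ_{w ∈ V, w ≠ u,v, uw ∈ E⁺, vw ∈ E⁺} min{θ_{uw}, θ_{vw}}, then there exists an optimal solution x* of the multicut problem min_{x ∈ MC(G)} ⟨θ, x⟩ with x*_{uv} = 0. -/

import Mathlib

set_option maxHeartbeats 1000000

variable {V : Type} [Fintype V] [DecidableEq V]

/-- The set of edges of `G` with one endpoint in `U` and the other in `W` (δ(U, W)). -/
def btw (G : SimpleGraph V) [DecidableRel G.Adj] (U W : Finset V) : Finset (Sym2 V) :=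
  G.edgeFinset.filter fun e => ∃ x ∈ U, ∃ y ∈ W, e = s(x, y)

/-- The cut δ(U) := δ(U, V \ U). -/
def cutδ (G : SimpleGraph V) [DecidableRel G.Adj] (U : Finset V) : Finset (Sym2 V) :=
  btw G U Uᶜ

/-- `M` is (the edge set of) a multicut of `G`. -/
def IsMulticut (G : SimpleGraph V) [DecidableRel G.Adj] (M : Finset (Sym2 V)) : Prop :=
  M ⊆ G.edgeFinset ∧ ∃ f : V → V, ∀ x y, G.Adj x y → (s(x, y) ∈ M ↔ f x ≠ f y)

/-- refined single-edge multicut criterion with triangle correction term. -/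
theorem stmt_16 (G : SimpleGraph V) [DecidableRel G.Adj] (θ : Sym2 V → ℝ)
    (u v : V) (huv : G.Adj u v) (hθuv : 0 ≤ θ (s(u, v)))
    (hcrit : (∑ e ∈ (cutδ G {u, v}).filter (fun e => 0 ≤ θ e), θ e)
        - (∑ w ∈ Finset.univ.filter (fun w => w ≠ u ∧ w ≠ v ∧
              G.Adj u w ∧ 0 ≤ θ (s(u, w)) ∧ G.Adj v w ∧ 0 ≤ θ (s(v, w))),
            min (θ (s(u, w))) (θ (s(v, w))))
        ≤ θ (s(u, v))) :
    ∃ M, IsMulticut G M ∧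
      (∀ N, IsMulticut G N → ∑ e ∈ M, θ e ≤ ∑ e ∈ N, θ e) ∧ s(u, v) ∉ M := by
  classical
  haveI : Nonempty V := ⟨u⟩
  have hne : ((G.edgeFinset.powerset).filter (fun M => IsMulticut G M)).Nonempty := by
    refine ⟨∅, Finset.mem_filter.mpr ⟨Finset.mem_powerset.mpr (Finset.empty_subset _), ?_⟩⟩
    exact ⟨Finset.empty_subset _, fun _ => u, fun x y _ => by simp⟩
  obtain ⟨M, hMS, hMmin⟩ :=
    Finset.exists_min_image _ (fun M => ∑ e ∈ M, θ e) hne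
  have hMmc : IsMulticut G M := (Finset.mem_filter.mp hMS).2
  have hmin : ∀ N, IsMulticut G N → ∑ e ∈ M, θ e ≤ ∑ e ∈ N, θ e := fun N hN =>
    hMmin N (Finset.mem_filter.mpr ⟨Finset.mem_powerset.mpr hN.1, hN⟩)
  by_cases huvM : s(u, v) ∈ M
  swap
  · exact ⟨M, hMmc, hmin, huvM⟩
  obtain ⟨hMsub, f, hf⟩ := hMmc
  have hfuv : f u ≠ f v := (hf u v huv).mp huvM
  -- the modified labeling
  set g : V → V := fun x => if x = u ∨ x = v then u else
      Classical.epsilon (fun y => ¬(y = u ∨ y = v) ∧ f y = f x) with hgdef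
  have hg1 : ∀ x, (x = u ∨ x = v) → g x = u := fun x hx => by simp [hgdef, hx]
  have hg2 : ∀ x, ¬(x = u ∨ x = v) → ¬(g x = u ∨ g x = v) ∧ f (g x) = f x := by
    intro x hx
    have : g x = Classical.epsilon (fun y => ¬(y = u ∨ y = v) ∧ f y = f x) := by
      simp [hgdef, hx]
    rw [this]
    exact Classical.epsilon_spec (p := fun y => ¬(y = u ∨ y = v) ∧ f y = f x) ⟨x, hx, rfl⟩
  have hg3 : ∀ x y, ¬(x = u ∨ x = v) → ¬(y = u ∨ y = v) → (g x = g y ↔ f x = f y) := by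
    intro x y hx hy
    constructor
    · intro h
      have h1 := (hg2 x hx).2
      have h2 := (hg2 y hy).2
      rw [← h1, ← h2, h]
    · intro h
      simp only [hgdef, if_neg hx, if_neg hy, h]
  -- the new multicut
  set N : Finset (Sym2 V) := G.edgeFinset.filter
      (fun e => e ∈ Sym2.fromRel (r := fun x y => g x ≠ g y) ⟨fun x y (h : g x ≠ g y) => (h ∘ Eq.symm : g y ≠ g x)⟩)
      with hNdef
  have hNmem : ∀ x y, s(x, y) ∈ N ↔ (G.Adj x y ∧ g x ≠ g y) := by
    intro x y
    simp [hNdef, Sym2.fromRel_prop, SimpleGraph.mem_edgeFinset]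
  have hNmc : IsMulticut G N := by
    refine ⟨Finset.filter_subset _ _, g, fun x y hxy => ?_⟩
    rw [hNmem]
    simp [hxy]
  have huvN : s(u, v) ∉ N := by
    rw [hNmem]
    rintro ⟨-, h⟩
    exact h (by rw [hg1 u (Or.inl rfl), hg1 v (Or.inr rfl)])
  set D : Finset (Sym2 V) := cutδ G {u, v} with hDdef
  have hDmem : ∀ x y, s(x, y) ∈ D ↔ G.Adj x y ∧
      (((x = u ∨ x = v) ∧ ¬(y = u ∨ y = v)) ∨ ((y = u ∨ y = v) ∧ ¬(x = u ∨ x = v))) := by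
    intro x y
    simp only [hDdef, cutδ, _root_.btw, Finset.mem_filter, SimpleGraph.mem_edgeFinset,
      SimpleGraph.mem_edgeSet, Finset.mem_compl, Finset.mem_insert, Finset.mem_singleton]
    constructor
    · rintro ⟨hadj, a, ha, b, hb, heq⟩
      refine ⟨hadj, ?_⟩
      rcases Sym2.eq_iff.mp heq with ⟨rfl, rfl⟩ | ⟨rfl, rfl⟩
      · exact Or.inl ⟨ha, hb⟩
      · exact Or.inr ⟨ha, hb⟩
    · rintro ⟨hadj, ⟨hx, hy⟩ | ⟨hy, hx⟩⟩
      · exact ⟨hadj, x, hx, y, hy, rfl⟩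
      · exact ⟨hadj, y, hy, x, hx, Sym2.eq_swap⟩
  -- decomposition of N
  have hNeq : N = (M.erase s(u, v)) ∪ (D.filter (fun e => e ∉ M)) := by
    ext e
    induction e using Sym2.ind with
    | _ x y =>
      by_cases hadj : G.Adj x y
      · have hxyne : x ≠ y := G.ne_of_adj hadj
        rw [hNmem, Finset.mem_union, Finset.mem_filter, Finset.mem_erase, hDmem]
        by_cases hx : x = u ∨ x = v <;> by_cases hy : y = u ∨ y = v
        · -- both in {u,v}: e = s(u,v)
          have heq : s(x, y) = s(u, v) := by
            rcases hx with rfl | rfl <;> rcases hy with rfl | rfl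
            · exact absurd rfl hxyne
            · rfl
            · exact Sym2.eq_swap
            · exact absurd rfl hxyne
          constructor
          · rintro ⟨-, h⟩
            exact absurd (by rw [hg1 x hx, hg1 y hy]) h
          · rintro (⟨hne, -⟩ | ⟨⟨-, h⟩, -⟩)
            · exact absurd heq hne
            · tauto
        · -- x in, y out
          have hgy := (hg2 y hy).1
          have hgne : g x ≠ g y := by
            rw [hg1 x hx]
            intro h
            exact hgy (Or.inl h.symm)
          have hnuv : s(x, y) ≠ s(u, v) := by
            intro h
            rcases Sym2.eq_iff.mp h with ⟨rfl, rfl⟩ | ⟨rfl, rfl⟩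
            · exact hy (Or.inr rfl)
            · exact hy (Or.inl rfl)
          constructor
          · intro _
            by_cases hM : s(x, y) ∈ M
            · exact Or.inl ⟨hnuv, hM⟩
            · exact Or.inr ⟨⟨hadj, Or.inl ⟨hx, hy⟩⟩, hM⟩
          · intro _
            exact ⟨hadj, hgne⟩
        · -- y in, x out
          have hgx := (hg2 x hx).1
          have hgne : g x ≠ g y := by
            rw [hg1 y hy]
            intro h
            exact hgx (Or.inl h)
          have hnuv : s(x, y) ≠ s(u, v) := by
            intro h
            rcases Sym2.eq_iff.mp h with ⟨rfl, rfl⟩ | ⟨rfl, rfl⟩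
            · exact hx (Or.inl rfl)
            · exact hx (Or.inr rfl)
          constructor
          · intro _
            by_cases hM : s(x, y) ∈ M
            · exact Or.inl ⟨hnuv, hM⟩
            · exact Or.inr ⟨⟨hadj, Or.inr ⟨hy, hx⟩⟩, hM⟩
          · intro _
            exact ⟨hadj, hgne⟩
        · -- both out
          have hnuv : s(x, y) ≠ s(u, v) := by
            intro h
            rcases Sym2.eq_iff.mp h with ⟨rfl, rfl⟩ | ⟨rfl, rfl⟩
            · exact hx (Or.inl rfl)
            · exact hx (Or.inr rfl)
          constructor
          · rintro ⟨-, h⟩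
            exact Or.inl ⟨hnuv, (hf x y hadj).mpr (fun hh => h ((hg3 x y hx hy).mpr hh))⟩
          · rintro (⟨-, hM⟩ | ⟨⟨-, hD⟩, -⟩)
            · exact ⟨hadj, fun hh => (hf x y hadj).mp hM ((hg3 x y hx hy).mp hh)⟩
            · tauto
      · -- not an edge: all memberships false
        have h1 : s(x, y) ∉ N := fun h => hadj ((hNmem x y).mp h).1
        have h2 : s(x, y) ∉ M := fun h => hadj (by
          have := hMsub h
          rwa [SimpleGraph.mem_edgeFinset, SimpleGraph.mem_edgeSet] at this)
        have h3 : s(x, y) ∉ D := fun h => hadj ((hDmem x y).mp h).1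
        simp [h1, h2, h3]
  -- sums
  have hdisj : Disjoint (M.erase s(u, v)) (D.filter (fun e => e ∉ M)) := by
    rw [Finset.disjoint_right]
    intro e he
    exact fun heM => (Finset.mem_filter.mp he).2 (Finset.mem_of_mem_erase heM)
  have hsumN : ∑ e ∈ N, θ e
      = (∑ e ∈ M, θ e - θ (s(u, v))) + ∑ e ∈ D.filter (fun e => e ∉ M), θ e := by
    rw [hNeq, Finset.sum_union hdisj]
    congr 1
    have := Finset.sum_erase_add M θ huvM
    linarith
  -- the key inequality
  set T : Finset V := Finset.univ.filter (fun w => w ≠ u ∧ w ≠ v ∧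
      G.Adj u w ∧ 0 ≤ θ (s(u, w)) ∧ G.Adj v w ∧ 0 ≤ θ (s(v, w))) with hTdef
  set Dp : Finset (Sym2 V) := D.filter (fun e => 0 ≤ θ e) with hDpdef
  set ew : V → Sym2 V := fun w => if s(u, w) ∈ M then s(u, w) else s(v, w) with hewdef
  have hewmem : ∀ w ∈ T, ew w ∈ Dp.filter (fun e => e ∈ M) ∧ min (θ (s(u, w))) (θ (s(v, w))) ≤ θ (ew w) := by
    intro w hw
    rw [hTdef, Finset.mem_filter] at hw
    obtain ⟨-, hwu, hwv, hadjuw, hposuw, hadjvw, hposvw⟩ := hw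
    have hwin : ¬(w = u ∨ w = v) := by tauto
    by_cases hM : s(u, w) ∈ M
    · have hew : ew w = s(u, w) := by simp [hewdef, hM]
      rw [hew]
      refine ⟨Finset.mem_filter.mpr ⟨Finset.mem_filter.mpr ⟨?_, hposuw⟩, hM⟩, min_le_left _ _⟩
      rw [hDmem]
      exact ⟨hadjuw, Or.inl ⟨Or.inl rfl, hwin⟩⟩
    · have hvwM : s(v, w) ∈ M := by
        rw [hf v w hadjvw]
        intro h
        have huw : f u = f w := not_not.mp (fun hh => hM ((hf u w hadjuw).mpr hh))
        exact hfuv (huw.trans h.symm)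
      have hew : ew w = s(v, w) := by simp [hewdef, hM]
      rw [hew]
      refine ⟨Finset.mem_filter.mpr ⟨Finset.mem_filter.mpr ⟨?_, hposvw⟩, hvwM⟩, min_le_right _ _⟩
      rw [hDmem]
      exact ⟨hadjvw, Or.inl ⟨Or.inr rfl, hwin⟩⟩
  have hewinj : ∀ w₁ ∈ T, ∀ w₂ ∈ T, ew w₁ = ew w₂ → w₁ = w₂ := by
    intro w₁ hw₁ w₂ hw₂ heq
    rw [hTdef, Finset.mem_filter] at hw₁ hw₂
    have h2u : w₂ ≠ u := hw₂.2.1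
    have h2v : w₂ ≠ v := hw₂.2.2.1
    simp only [hewdef] at heq
    split_ifs at heq <;>
      rcases Sym2.eq_iff.mp heq with ⟨h, h'⟩ | ⟨h, h'⟩ <;>
      first
        | exact h'
        | exact absurd h.symm h2u
        | exact absurd h.symm h2v
  have hsum1 : ∑ w ∈ T, min (θ (s(u, w))) (θ (s(v, w)))
      ≤ ∑ e ∈ Dp.filter (fun e => e ∈ M), θ e := by
    have h1 : ∑ w ∈ T, min (θ (s(u, w))) (θ (s(v, w))) ≤ ∑ w ∈ T, θ (ew w) :=
      Finset.sum_le_sum (fun w hw => (hewmem w hw).2)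
    have h2 : ∑ w ∈ T, θ (ew w) = ∑ e ∈ T.image ew, θ e := (Finset.sum_image hewinj).symm
    have h3 : T.image ew ⊆ Dp.filter (fun e => e ∈ M) := by
      intro e he
      obtain ⟨w, hw, rfl⟩ := Finset.mem_image.mp he
      exact (hewmem w hw).1
    have h4 : ∑ e ∈ T.image ew, θ e ≤ ∑ e ∈ Dp.filter (fun e => e ∈ M), θ e := by
      refine Finset.sum_le_sum_of_subset_of_nonneg h3 (fun e heDp _ => ?_)
      exact (Finset.mem_filter.mp (Finset.mem_filter.mp heDp).1).2
    linarith
  have hsplit : ∑ e ∈ Dp.filter (fun e => e ∈ M), θ e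
      + ∑ e ∈ Dp.filter (fun e => ¬ e ∈ M), θ e = ∑ e ∈ Dp, θ e :=
    Finset.sum_filter_add_sum_filter_not Dp (fun e => e ∈ M) θ
  have hneg : ∑ e ∈ D.filter (fun e => e ∉ M), θ e
      ≤ ∑ e ∈ Dp.filter (fun e => ¬ e ∈ M), θ e := by
    have hsplit2 := Finset.sum_filter_add_sum_filter_not
      (D.filter (fun e => e ∉ M)) (fun e => 0 ≤ θ e) θ
    have hcm : (D.filter (fun e => e ∉ M)).filter (fun e => 0 ≤ θ e)
        = Dp.filter (fun e => ¬ e ∈ M) := by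
      rw [hDpdef, Finset.filter_comm]
    have hnp : ∑ e ∈ (D.filter (fun e => e ∉ M)).filter (fun e => ¬ 0 ≤ θ e), θ e ≤ 0 :=
      Finset.sum_nonpos (fun e he => le_of_not_ge (Finset.mem_filter.mp he).2)
    rw [hcm] at hsplit2
    linarith
  have hkey : ∑ e ∈ D.filter (fun e => e ∉ M), θ e ≤ θ (s(u, v)) := by
    linarith
  refine ⟨N, hNmc, fun K hK => ?_, huvN⟩
  have hNM : ∑ e ∈ N, θ e ≤ ∑ e ∈ M, θ e := by rw [hsumN]; linarith
  exact hNM.trans (hmin K hK)
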